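/- Let (c_n) be a sequence in ℝ^p with ‖c_n‖ → ∞ as n → ∞. Then there exist x ∈ {−1,1}^p (a vector all of whose coordinates are ±1), ε ∈ (0,1), and a strictly increasing function φ : ℕ → ℕ such that inf_{y ∈ B(x,ε)} c_{φ(n)}·y → ∞ as n → ∞; in particular limsup_n inf_{y ∈ B(x,ε)} c_n·y = ∞. -/

import Mathlib

open Filter RealInnerProductSpace

set_option maxHeartbeats 1600000 in
/-- If `‖c_n‖ → ∞`, then there are a sign vector `x ∈ {−1,1}^p`,
`ε ∈ (0,1)` and a subsequence along which `inf_{y ∈ B(x,ε)} c_n·y → ∞`; in particular,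
for every `M` one frequently has `inf_{y ∈ B(x,ε)} c_n·y ≥ M`. -/
theorem statement4 {p : ℕ} (c : ℕ → EuclideanSpace ℝ (Fin p))
    (hc : Tendsto (fun n => ‖c n‖) atTop atTop) :
    ∃ x : EuclideanSpace ℝ (Fin p), (∀ i, x i = 1 ∨ x i = -1) ∧
      ∃ ε : ℝ, 0 < ε ∧ ε < 1 ∧
        (∃ φ : ℕ → ℕ, StrictMono φ ∧
          Tendsto (fun n => ⨅ y : Metric.ball x ε, ⟪c (φ n), (y : EuclideanSpace ℝ (Fin p))⟫)
            atTop atTop) ∧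
        (∀ M : ℝ, ∃ᶠ n in atTop,
          M ≤ ⨅ y : Metric.ball x ε, ⟪c n, (y : EuclideanSpace ℝ (Fin p))⟫) := by
  classical
  obtain ⟨N, hN⟩ := eventually_atTop.1 (hc.eventually_ge_atTop 1)
  have hcn : ∀ n, (1:ℝ) ≤ ‖c (n + N)‖ := fun n => hN _ (Nat.le_add_left N n)
  have hcpos : ∀ n, (0:ℝ) < ‖c (n + N)‖ := fun n => lt_of_lt_of_le one_pos (hcn n)
  set u : ℕ → EuclideanSpace ℝ (Fin p) := fun n => ‖c (n + N)‖⁻¹ • c (n + N) with hu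
  have husph : ∀ n, u n ∈ Metric.sphere (0:EuclideanSpace ℝ (Fin p)) 1 := by
    intro n
    simp [u, norm_smul, abs_of_pos (inv_pos.2 (hcpos n)),
      inv_mul_cancel₀ (hcpos n).ne']
  obtain ⟨w, hwmem, φ₀, hφ₀, hconv⟩ := (isCompact_sphere (0:EuclideanSpace ℝ (Fin p)) 1).tendsto_subseq husph
  have hwnorm : ‖w‖ = 1 := by simpa using hwmem
  set x : EuclideanSpace ℝ (Fin p) := WithLp.toLp 2 (fun i => if 0 ≤ w i then (1:ℝ) else -1) with hx
  have hxsign : ∀ i, x i = 1 ∨ x i = -1 := by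
    intro i; by_cases h : 0 ≤ w i <;> simp [x, h]
  -- 1 ≤ ⟪w, x⟫
  have hterm : ∀ i, w i * x i = |w i| := by
    intro i; by_cases h : 0 ≤ w i
    · simp [x, h, abs_of_nonneg h]
    · simp [x, h, abs_of_neg (lt_of_not_ge h)]
  have hsum : ⟪w, x⟫ = ∑ i, |w i| := by
    rw [PiLp.inner_apply]
    exact Finset.sum_congr rfl fun i _ => by
      simpa [RCLike.inner_apply] using (mul_comm (x i) (w i)).trans (hterm i)
  have hnorm2 : ∑ i, w i ^ 2 = 1 := by
    have h1 : ⟪w, w⟫ = ‖w‖ ^ 2 := real_inner_self_eq_norm_sq w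
    rw [hwnorm, PiLp.inner_apply] at h1
    simpa [RCLike.inner_apply, sq] using h1
  have habs : ∀ i, |w i| ≤ 1 := by
    intro i
    have h1 : w i ^ 2 ≤ ∑ j, w j ^ 2 :=
      Finset.single_le_sum (fun j _ => sq_nonneg (w j)) (Finset.mem_univ i)
    rw [hnorm2] at h1
    nlinarith [abs_nonneg (w i), sq_abs (w i)]
  have hinner : (1:ℝ) ≤ ⟪w, x⟫ := by
    rw [hsum, ← hnorm2]
    apply Finset.sum_le_sum
    intro i _
    have := habs i
    nlinarith [abs_nonneg (w i), sq_abs (w i)]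
  -- the subsequence
  set φ : ℕ → ℕ := fun n => φ₀ n + N with hφdef
  have hφ : StrictMono φ := fun a b h => by
    simpa [φ] using Nat.add_lt_add_right (hφ₀ h) N
  have hφt : Tendsto φ atTop atTop := hφ.tendsto_atTop
  haveI : Nonempty (Metric.ball x (1/2 : ℝ)) :=
    ⟨⟨x, Metric.mem_ball_self (by norm_num)⟩⟩
  -- lower bound on the infimum
  have hlow : ∀ m, ⟪c m, x⟫ - ‖c m‖ * (1/2) ≤
      ⨅ y : Metric.ball x (1/2 : ℝ), ⟪c m, (y : EuclideanSpace ℝ (Fin p))⟫ := by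
    intro m
    apply le_ciInf
    rintro ⟨y, hy⟩
    have h1 : ⟪c m, x⟫ - ⟪c m, y⟫ = ⟪c m, x - y⟫ := (inner_sub_right _ _ _).symm
    have h2 : ⟪c m, x - y⟫ ≤ ‖c m‖ * ‖x - y‖ := real_inner_le_norm _ _
    have h3 : ‖x - y‖ ≤ 1/2 := by
      rw [← dist_eq_norm, dist_comm]
      exact le_of_lt (Metric.mem_ball.1 hy)
    nlinarith [norm_nonneg (c m)]
  -- decomposition
  have hdecomp : ∀ n, ⟪c (φ n), x⟫ = ‖c (φ n)‖ * ⟪u (φ₀ n), x⟫ := by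
    intro n
    have : ⟪u (φ₀ n), x⟫ = ‖c (φ₀ n + N)‖⁻¹ * ⟪c (φ₀ n + N), x⟫ :=
      real_inner_smul_left _ _ _
    rw [this]
    field_simp [φ, (hcpos (φ₀ n)).ne']
    exact mul_comm _ _
  have ht : Tendsto (fun n => ⟪u (φ₀ n), x⟫) atTop (nhds ⟪w, x⟫) :=
    hconv.inner tendsto_const_nhds
  have hev : ∀ᶠ n in atTop, (3/4 : ℝ) < ⟪u (φ₀ n), x⟫ :=
    ht.eventually (lt_mem_nhds (by linarith))
  have hmain : Tendsto
      (fun n => ⨅ y : Metric.ball x (1/2 : ℝ), ⟪c (φ n), (y : EuclideanSpace ℝ (Fin p))⟫) atTop atTop := by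
    apply tendsto_atTop_mono' atTop _
      ((hc.comp hφt).atTop_mul_const (show (0:ℝ) < 1/4 by norm_num))
    filter_upwards [hev] with n hn
    calc ‖c (φ n)‖ * (1/4) ≤ ⟪c (φ n), x⟫ - ‖c (φ n)‖ * (1/2) := by
          rw [hdecomp n]
          nlinarith [norm_nonneg (c (φ n))]
      _ ≤ _ := hlow (φ n)
  refine ⟨x, hxsign, 1/2, by norm_num, by norm_num, ⟨φ, hφ, hmain⟩, ?_⟩
  intro M
  have hevM : ∀ᶠ n in Filter.map φ atTop,
      M ≤ ⨅ y : Metric.ball x (1/2 : ℝ), ⟪c n, (y : EuclideanSpace ℝ (Fin p))⟫ :=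
    eventually_map.2 (hmain.eventually_ge_atTop M)
  exact hevM.frequently.filter_mono hφt
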